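/- Let d be a positive integer. There exists a constant z ≥ 0 depending only on d with the following property: for every f ∈ L(d) there is a nonempty compact set X ⊆ ℝ^d such that for all 0 ≤ v ≤ u, one has f(u, v+z) − z ≤ β_X(u,v) whenever v ≤ u − z, and β_X(u,v) ≤ f(u, v−z) + z whenever v ≥ z. -/

import Mathlib

open Metric Set Filter
open scoped ENNReal NNReal

noncomputable section

/-- Least number of closed balls of radius `r` needed to cover `E`. -/
def coveringNumber {X : Type*} [MetricSpace X] (r : ℝ) (E : Set X) : ℕ∞ :=
  sInf {n : ℕ∞ | ∃ s : Finset X, (s.card : ℕ∞) = n ∧ E ⊆ ⋃ x ∈ s, Metric.closedBall x r}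

/-- Packing number: the largest cardinality of a subset of `E` whose closed `2r`-balls are
pairwise disjoint. -/
def packingNumber {X : Type*} [MetricSpace X] (r : ℝ) (E : Set X) : ℕ∞ :=
  sSup {n : ℕ∞ | ∃ s : Finset X, (s.card : ℕ∞) = n ∧ ↑s ⊆ E ∧
    (s : Set X).Pairwise fun x y =>
      Disjoint (Metric.closedBall x (2 * r)) (Metric.closedBall y (2 * r))}

/-- Base-2 logarithm `ℕ∞ → ℝ≥0∞`, clamped below at `0`. -/
def elog2 (n : ℕ∞) : ℝ≥0∞ :=
  if n = ⊤ then ⊤ else ENNReal.ofReal (Real.logb 2 (n.toNat : ℝ))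

/-- The infimal two-scale branching function `β_X(u,v) = log₂ inf_x P_{2^{-u}}(B(x,2^{-v}))`. -/
def brL (X : Type*) [MetricSpace X] (u v : ℝ) : ℝ≥0∞ :=
  elog2 (⨅ x : X, packingNumber ((2 : ℝ) ^ (-u)) (Metric.closedBall x ((2 : ℝ) ^ (-v))))

/-- The supremal two-scale branching function `ν_X(u,v) = log₂ sup_x N_{2^{-u}}(B(x,2^{-v}))`. -/
def brU (X : Type*) [MetricSpace X] (u v : ℝ) : ℝ≥0∞ :=
  elog2 (⨆ x : X, coveringNumber ((2 : ℝ) ^ (-u)) (Metric.closedBall x ((2 : ℝ) ^ (-v))))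

/-- The lower spectrum `dim_L^θ X`, valued in `[0,∞]`. -/
def lowerSpectrum (X : Type*) [MetricSpace X] (θ : ℝ) : ℝ≥0∞ :=
  ⨆ s ∈ {s : ℝ | 0 ≤ s ∧ ∃ C : ℝ, 0 < C ∧ ∀ r : ℝ, 0 < r → r < 1 → ∀ x : X,
      ENNReal.ofReal (C * (r ^ (θ - 1)) ^ s) ≤
        (coveringNumber r (Metric.closedBall x (r ^ θ)) : ℝ≥0∞)},
    ENNReal.ofReal s

/-- The monotone (quasi-) lower spectrum. -/
def monoLowerSpectrum (X : Type*) [MetricSpace X] (θ : ℝ) : ℝ≥0∞ :=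
  ⨆ s ∈ {s : ℝ | 0 ≤ s ∧ ∃ C : ℝ, 0 < C ∧ ∀ r R : ℝ, 0 < r → r ≤ r ^ θ → r ^ θ ≤ R → R < 1 →
      ∀ x : X, ENNReal.ofReal (C * (R / r) ^ s) ≤
        (coveringNumber r (Metric.closedBall x R) : ℝ≥0∞)},
    ENNReal.ofReal s

/-- The class `L(α)`: functions on `Δ = {v ≤ u}` that are nonnegative, vanish on the diagonal,
are superadditive, and are `α`-Lipschitz in the first variable. -/
def MemL (α : ℝ) (f : ℝ → ℝ → ℝ) : Prop :=
  (∀ u v : ℝ, v ≤ u → 0 ≤ f u v) ∧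
  (∀ u : ℝ, f u u = 0) ∧
  (∀ u w v : ℝ, v ≤ w → w ≤ u → f u w + f w v ≤ f u v) ∧
  (∀ v u₁ u₂ : ℝ, v ≤ u₁ → v ≤ u₂ → |f u₁ v - f u₂ v| ≤ α * |u₁ - u₂|)

/-- The class `H(α)`: functions `(0,1] → [0,α]` satisfying (S) and (W). -/
def MemH (α : ℝ) (φ : ℝ → ℝ) : Prop :=
  (∀ θ : ℝ, 0 < θ → θ ≤ 1 → 0 ≤ φ θ ∧ φ θ ≤ α) ∧
  (∀ lam θ : ℝ, 0 < lam → lam ≤ 1 → 0 < θ → θ ≤ 1 → φ θ + θ * φ lam ≤ φ (lam * θ)) ∧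
  (∀ lam θ : ℝ, 0 < lam → lam ≤ 1 → 0 < θ → θ ≤ 1 → φ (lam * θ) ≤ (1 - θ) * α + θ * φ lam)

/-- The class `M(α)`: functions `(0,1] → [0,α]` satisfying (W) and (M). -/
def MemM (α : ℝ) (φ : ℝ → ℝ) : Prop :=
  (∀ θ : ℝ, 0 < θ → θ ≤ 1 → 0 ≤ φ θ ∧ φ θ ≤ α) ∧
  (∀ lam θ : ℝ, 0 < lam → lam ≤ 1 → 0 < θ → θ ≤ 1 → φ (lam * θ) ≤ (1 - θ) * α + θ * φ lam) ∧
  (∀ θ₁ θ₂ : ℝ, 0 < θ₁ → θ₁ ≤ θ₂ → θ₂ < 1 → φ θ₂ / (1 - θ₂) ≤ φ θ₁ / (1 - θ₁))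

/-- The normalized limit `Λ(f)(θ) = liminf_{u→∞} f(u, θu)/u` for real-valued `f`. -/
def Lam (f : ℝ → ℝ → ℝ) (θ : ℝ) : ℝ :=
  Filter.liminf (fun u => f u (θ * u) / u) Filter.atTop

/-- The normalized limit `Λ(g)(θ) = liminf_{u→∞} g(u, θu)/u` for `[0,∞]`-valued `g`. -/
def LamE (g : ℝ → ℝ → ENNReal) (θ : ℝ) : ℝ≥0∞ :=
  Filter.liminf (fun u => g u (θ * u) / ENNReal.ofReal u) Filter.atTop

/-- The two-piece affine function `φ_{α,λ,t}` through `(0,α)`, `(λ,t)` and `(1,0)`. -/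
def phiFun (α lam t : ℝ) : ℝ → ℝ := fun θ =>
  if θ ≤ lam then α + (θ / lam) * (t - α) else t * (1 - θ) / (1 - lam)

/-- The maximal element `h_{g,z}` of `L(α)` agreeing with `g` on the strip `{(u,z) : u ≥ z}`. -/
def hFun (α : ℝ) (g : ℝ → ℝ) (z : ℝ) : ℝ → ℝ → ℝ := fun u v =>
  if z ≤ v then g u - g v else α * (u - v)

/-- A metric space is `η`-uniform if `η(u)/u → 0` and `ν_X ≤ β_X + η(u)` on `Δ`. -/
def IsEtaUniform (η : ℝ → ℝ) (X : Type*) [MetricSpace X] : Prop :=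
  Filter.Tendsto (fun u => η u / u) Filter.atTop (nhds 0) ∧
  ∀ u v : ℝ, v ≤ u → brU X u v ≤ brL X u v + ENNReal.ofReal (η u)

/-- A metric space is uniform if it is `η`-uniform for some `η`. -/
def IsUniform (X : Type*) [MetricSpace X] : Prop := ∃ η : ℝ → ℝ, IsEtaUniform η X

/-- The relation `f ≍ g` between a real-valued and an `[0,∞]`-valued function on `Δ`. -/
def AsympRE (f : ℝ → ℝ → ℝ) (g : ℝ → ℝ → ENNReal) : Prop :=
  ∃ η : ℝ → ℝ, (∀ u : ℝ, 0 ≤ η u) ∧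
    Filter.Tendsto (fun u => η u / u) Filter.atTop (nhds 0) ∧
    ∀ u v : ℝ, 0 ≤ v → v ≤ u →
      (v ≤ u - η u → ENNReal.ofReal (f u (v + η u) - η u) ≤ g u v) ∧
      (η u ≤ v → g u v ≤ ENNReal.ofReal (f u (v - η u) + η u))

namespace BFA


/-- weight `2^{-n}` -/
def w (n : ℕ) : ℝ := ((1:ℝ)/2) ^ n

lemma w_pos (n : ℕ) : 0 < w n := pow_pos (by norm_num) n

lemma w_eq_rpow (n : ℕ) : w n = (2:ℝ) ^ (-(n:ℝ)) := by
  rw [Real.rpow_neg (by norm_num), Real.rpow_natCast]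
  simp [w, one_div, inv_pow]

lemma w_anti {a b : ℕ} (h : a ≤ b) : w b ≤ w a :=
  pow_le_pow_of_le_one (by norm_num) (by norm_num) h

lemma w_succ (n : ℕ) : w (n+1) = w n / 2 := by
  simp [w, pow_succ]; ring

lemma w_add (a b : ℕ) : w (a+b) = w a * w b := by
  simp [w, pow_add]

lemma w_le_one (n : ℕ) : w n ≤ 1 :=
  pow_le_one₀ (by norm_num) (by norm_num)

/-- partial geometric sum -/
lemma sum_w (a : ℕ) : ∀ q : ℕ, ∑ k ∈ Finset.range q, w (a+k+1) = w a - w (a+q) := by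
  intro q
  induction q with
  | zero => simp
  | succ q ih =>
    rw [Finset.sum_range_succ, ih, w_succ (a+q)]
    have h2 : a + (q+1) = (a+q) + 1 := by omega
    rw [h2, w_succ]
    ring

lemma summable_w_shift (a : ℕ) : Summable (fun k : ℕ => w (a+k+1)) := by
  have h : (fun k : ℕ => w (a+k+1)) = (fun k : ℕ => w (a+1) * ((1:ℝ)/2)^k) := by
    funext k
    have h2 : a + k + 1 = (a+1) + k := by omega
    rw [h2, w_add]
    simp [w]
  rw [h]
  exact (summable_geometric_of_lt_one (by norm_num) (by norm_num)).mul_left _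

lemma tsum_w_shift (a : ℕ) : ∑' k : ℕ, w (a+k+1) = w a := by
  have h : ∀ k : ℕ, w (a+k+1) = w (a+1) * ((1:ℝ)/2)^k := by
    intro k
    have h2 : a + k + 1 = (a+1) + k := by omega
    rw [h2, w_add]
    simp [w]
  simp_rw [h]
  rw [tsum_mul_left, tsum_geometric_of_lt_one (by norm_num) (by norm_num), w_succ]
  norm_num



/-- the branching number at step `k`, given current count `C`. -/
def Nf (g : ℕ → ℝ) (C : ℕ) (k : ℕ) : ℕ :=
  if (2:ℝ)^(g (k+1)) ≤ C then 1 else ⌈(2:ℝ)^(g (k+1)) / C⌉₊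

/-- cumulative counts -/
def Cf (g : ℕ → ℝ) : ℕ → ℕ
  | 0 => 1
  | (k+1) => Cf g k * Nf g (Cf g k) k

/-- branching numbers along the run -/
def NN (g : ℕ → ℝ) (k : ℕ) : ℕ := Nf g (Cf g k) k

lemma Cf_succ (g : ℕ → ℝ) (k : ℕ) : Cf g (k+1) = Cf g k * NN g k := rfl

lemma NN_pos (g : ℕ → ℝ) (k : ℕ) (hC : 0 < Cf g k) : 0 < NN g k := by
  unfold NN Nf
  split
  · norm_num
  · rename_i h
    push_neg at h
    have : (0:ℝ) < (2:ℝ)^(g (k+1)) / (Cf g k) := by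
      apply div_pos (Real.rpow_pos_of_pos (by norm_num) _)
      exact_mod_cast hC
    exact Nat.ceil_pos.mpr this

lemma Cf_pos (g : ℕ → ℝ) : ∀ k, 0 < Cf g k := by
  intro k
  induction k with
  | zero => simp [Cf]
  | succ k ih => rw [Cf_succ]; exact Nat.mul_pos ih (NN_pos g k ih)

/-- main invariant -/
lemma Cf_bounds (g : ℕ → ℝ) (hg0 : g 0 = 0) (hmono : ∀ k, g k ≤ g (k+1)) :
    ∀ k, (2:ℝ)^(g k) ≤ Cf g k ∧ (Cf g k : ℝ) ≤ 2 * (2:ℝ)^(g k) := by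
  intro k
  induction k with
  | zero => simp [Cf, hg0]
  | succ k ih =>
    obtain ⟨hlo, hhi⟩ := ih
    have hCpos : (0:ℝ) < Cf g k := by exact_mod_cast Cf_pos g k
    rw [Cf_succ]
    unfold NN Nf
    split
    · rename_i h
      push_cast
      constructor
      · simpa using h
      · calc (Cf g k : ℝ) * 1 = Cf g k := by ring
          _ ≤ 2 * (2:ℝ)^(g k) := hhi
          _ ≤ 2 * (2:ℝ)^(g (k+1)) := by
              have := Real.rpow_le_rpow_left_iff (x := (2:ℝ)) (y := g k) (z := g (k+1)) (by norm_num)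
              nlinarith [this.mpr (hmono k)]
    · rename_i h
      push_neg at h
      have hq : (1:ℝ) < (2:ℝ)^(g (k+1)) / (Cf g k) := (one_lt_div hCpos).mpr h
      have hceil_lo : (2:ℝ)^(g (k+1)) / (Cf g k) ≤ (⌈(2:ℝ)^(g (k+1)) / (Cf g k)⌉₊ : ℝ) :=
        Nat.le_ceil _
      have hceil_hi : (⌈(2:ℝ)^(g (k+1)) / (Cf g k)⌉₊ : ℝ) < (2:ℝ)^(g (k+1)) / (Cf g k) + 1 :=
        Nat.ceil_lt_add_one (le_of_lt (lt_trans one_pos hq))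
      push_cast
      constructor
      · calc (2:ℝ)^(g (k+1)) = ((2:ℝ)^(g (k+1)) / (Cf g k)) * Cf g k := by field_simp
          _ ≤ (⌈(2:ℝ)^(g (k+1)) / (Cf g k)⌉₊ : ℝ) * Cf g k := by
              apply mul_le_mul_of_nonneg_right hceil_lo (le_of_lt hCpos)
          _ = (Cf g k : ℝ) * (⌈(2:ℝ)^(g (k+1)) / (Cf g k)⌉₊ : ℝ) := by ring
      · calc (Cf g k : ℝ) * (⌈(2:ℝ)^(g (k+1)) / (Cf g k)⌉₊ : ℝ)
            ≤ (Cf g k : ℝ) * ((2:ℝ)^(g (k+1)) / (Cf g k) + 1) := by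
              apply mul_le_mul_of_nonneg_left (le_of_lt hceil_hi) (le_of_lt hCpos)
          _ = (2:ℝ)^(g (k+1)) + Cf g k := by field_simp
          _ ≤ (2:ℝ)^(g (k+1)) + (2:ℝ)^(g (k+1)) := by linarith
          _ = 2 * (2:ℝ)^(g (k+1)) := by ring

/-- the branching numbers are at most `2^d` -/
lemma NN_le (g : ℕ → ℝ) (d : ℕ) (hg0 : g 0 = 0) (hmono : ∀ k, g k ≤ g (k+1))
    (hlip : ∀ k, g (k+1) ≤ g k + d) : ∀ k, NN g k ≤ 2^d := by
  intro k
  unfold NN Nf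
  split
  · exact Nat.one_le_two_pow
  · rename_i h
    push_neg at h
    obtain ⟨hlo, _⟩ := Cf_bounds g hg0 hmono k
    have hCpos : (0:ℝ) < Cf g k := by exact_mod_cast Cf_pos g k
    rw [Nat.ceil_le]
    push_cast
    calc (2:ℝ)^(g (k+1)) / (Cf g k) ≤ (2:ℝ)^(g (k+1)) / (2:ℝ)^(g k) := by
          apply div_le_div_of_nonneg_left _ (Real.rpow_pos_of_pos (by norm_num) _) hlo
          positivity
      _ = (2:ℝ)^(g (k+1) - g k) := by rw [← Real.rpow_sub (by norm_num)]
      _ ≤ (2:ℝ)^(d:ℝ) := by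
          apply Real.rpow_le_rpow_of_exponent_le (by norm_num)
          linarith [hlip k]
      _ = ((2:ℕ)^d : ℝ) := by
          rw [Real.rpow_natCast]; push_cast; ring

/-- count over a window -/
lemma Cf_window (g : ℕ → ℝ) (p : ℕ) : ∀ q : ℕ,
    Cf g (p+q) = Cf g p * ∏ k ∈ Finset.range q, NN g (p+k) := by
  intro q
  induction q with
  | zero => simp
  | succ q ih =>
    have : p + (q+1) = (p+q)+1 := by omega
    rw [this, Cf_succ, ih, Finset.prod_range_succ, mul_assoc]



variable {d : ℕ}

lemma coord_le_dist (x y : EuclideanSpace ℝ (Fin d)) (i : Fin d) :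
    |x i - y i| ≤ dist x y := by
  rw [EuclideanSpace.dist_eq]
  simp_rw [Real.dist_eq]
  rw [← Real.sqrt_sq_eq_abs]
  apply Real.sqrt_le_sqrt
  rw [← sq_abs (x i - y i)]
  exact Finset.single_le_sum (f := fun j => |x j - y j|^2) (fun j _ => sq_nonneg _)
    (Finset.mem_univ i)

lemma dist_le_of_coords (x y : EuclideanSpace ℝ (Fin d)) (c : ℝ) (hc : 0 ≤ c)
    (h : ∀ i, |x i - y i| ≤ c) : dist x y ≤ Real.sqrt d * c := by
  rw [EuclideanSpace.dist_eq]
  simp_rw [Real.dist_eq]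
  have h1 : ∑ i, |x i - y i|^2 ≤ (d:ℝ) * c^2 := by
    calc ∑ i, |x i - y i|^2 ≤ ∑ _i : Fin d, c^2 := by
          apply Finset.sum_le_sum
          intro i _
          exact pow_le_pow_left₀ (abs_nonneg _) (h i) 2
      _ = (d:ℝ) * c^2 := by simp [mul_comm]
  calc Real.sqrt (∑ i, |x i - y i|^2) ≤ Real.sqrt ((d:ℝ) * c^2) := Real.sqrt_le_sqrt h1
    _ = Real.sqrt d * c := by
        rw [Real.sqrt_mul (by positivity), Real.sqrt_sq hc]

lemma elog2_mono : Monotone elog2 := by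
  intro a b hab
  unfold elog2
  rcases eq_or_ne b ⊤ with hb | hb
  · simp [hb]
  · have ha : a ≠ ⊤ := fun h => hb (top_le_iff.mp (h ▸ hab))
    simp only [ha, hb, if_neg, if_false]
    apply ENNReal.ofReal_le_ofReal
    have hab' : a.toNat ≤ b.toNat := by
      lift a to ℕ using ha
      lift b to ℕ using hb
      exact_mod_cast hab
    rcases Nat.eq_zero_or_pos a.toNat with h0 | h0
    · rw [h0]
      simp only [Nat.cast_zero, Real.logb_zero]
      rcases Nat.eq_zero_or_pos b.toNat with h1 | h1
      · simp [h1]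
      · apply Real.logb_nonneg (by norm_num)
        exact_mod_cast h1
    · exact Real.logb_le_logb_of_le (by norm_num) (by exact_mod_cast h0) (by exact_mod_cast hab')

lemma elog2_natCast (K : ℕ) : elog2 (K : ℕ∞) = ENNReal.ofReal (Real.logb 2 K) := by
  unfold elog2
  rw [if_neg (ENat.coe_ne_top K)]
  rw [ENat.toNat_coe]

lemma le_elog2 {n : ℕ∞} {K : ℕ} (t : ℝ) (h2 : (2:ℝ)^t ≤ K) (hn : (K : ℕ∞) ≤ n) :
    ENNReal.ofReal t ≤ elog2 n := by
  calc ENNReal.ofReal t ≤ ENNReal.ofReal (Real.logb 2 K) := by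
        apply ENNReal.ofReal_le_ofReal
        rw [Real.le_logb_iff_rpow_le (by norm_num)]
        · exact h2
        · have : (0:ℝ) < (2:ℝ)^t := Real.rpow_pos_of_pos (by norm_num) t
          linarith
    _ = elog2 (K : ℕ∞) := (elog2_natCast K).symm
    _ ≤ elog2 n := elog2_mono hn

lemma elog2_le {n : ℕ∞} {K : ℕ} (t : ℝ) (ht : 0 ≤ t) (h2 : (K:ℝ) ≤ (2:ℝ)^t)
    (hn : n ≤ (K : ℕ∞)) : elog2 n ≤ ENNReal.ofReal t := by
  calc elog2 n ≤ elog2 (K : ℕ∞) := elog2_mono hn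
    _ = ENNReal.ofReal (Real.logb 2 K) := elog2_natCast K
    _ ≤ ENNReal.ofReal t := by
        apply ENNReal.ofReal_le_ofReal
        rcases Nat.eq_zero_or_pos K with h0 | h0
        · simp only [h0, Nat.cast_zero, Real.logb_zero]; exact ht
        · rw [Real.logb_le_iff_le_rpow (by norm_num) (by exact_mod_cast h0)]
          exact h2

/-- lower bound for packing number from an ambient separated family inside a subtype ball -/
lemma packing_ge {A : Type*} [MetricSpace A] (X : Set A) (r R : ℝ) (hr : 0 < r)
    (x : X) (t : Finset A) (htX : ∀ y ∈ t, y ∈ X) (htB : ∀ y ∈ t, dist y (x:A) ≤ R)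
    (hsep : ∀ y ∈ t, ∀ z_ ∈ t, y ≠ z_ → 4 * r < dist y z_) :
    (t.card : ℕ∞) ≤ packingNumber r (Metric.closedBall x R) := by
  classical
  set s : Finset X := t.attach.map ⟨fun a => (⟨a.1, htX a.1 a.2⟩ : X), by
    intro a b hab
    exact Subtype.ext (by simpa using congrArg Subtype.val hab)⟩ with hs
  have hcard : s.card = t.card := by simp [hs]
  apply le_sSup
  refine ⟨s, by rw [hcard], ?_, ?_⟩
  · intro y hy
    rw [Finset.mem_coe, hs, Finset.mem_map] at hy
    obtain ⟨a, _, rfl⟩ := hy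
    simp only [Metric.mem_closedBall, Function.Embedding.coeFn_mk]
    rw [Subtype.dist_eq]
    exact htB a.1 a.2
  · intro p hp q hq hpq
    rw [Finset.mem_coe, hs, Finset.mem_map] at hp hq
    obtain ⟨a, _, rfl⟩ := hp
    obtain ⟨b, _, rfl⟩ := hq
    apply Metric.closedBall_disjoint_closedBall
    rw [Subtype.dist_eq]
    have hab : (a:A) ≠ (b:A) := by
      intro h
      exact hpq (Subtype.ext h)
    have := hsep a.1 a.2 b.1 b.2 hab
    show 2 * r + 2 * r < dist (a:A) (b:A)
    linarith

/-- upper bound for packing number -/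
lemma packing_le {A : Type*} [MetricSpace A] (X : Set A) (r R : ℝ) (hr : 0 < r)
    (x : X) (n : ℕ)
    (h : ∀ s : Finset X, (↑s ⊆ Metric.closedBall x R) →
      ((s : Set X).Pairwise fun p q => 2 * r < dist (p:A) (q:A)) → s.card ≤ n) :
    packingNumber r (Metric.closedBall x R) ≤ n := by
  apply sSup_le
  rintro m ⟨s, rfl, hsE, hsP⟩
  have : s.card ≤ n := by
    apply h s hsE
    intro p hp q hq hpq
    have hd := hsP hp hq hpq
    by_contra hle
    push_neg at hle
    have hp' : p ∈ Metric.closedBall p (2*r) := Metric.mem_closedBall_self (by linarith)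
    have hq' : p ∈ Metric.closedBall q (2*r) := by
      simp only [Metric.mem_closedBall]
      rw [Subtype.dist_eq]
      exact hle
    exact (Set.disjoint_left.mp hd hp') hq'
  exact_mod_cast this


end BFA
namespace BFA

/-! ### bit digits -/

def bitr (n : ℕ) (i : ℕ) : ℝ := if n.testBit i then 1 else 0

lemma bitr_nonneg (n i : ℕ) : 0 ≤ bitr n i := by unfold bitr; split <;> norm_num

lemma bitr_le_one (n i : ℕ) : bitr n i ≤ 1 := by unfold bitr; split <;> norm_num

lemma abs_bitr_sub_le (n n' i : ℕ) : |bitr n i - bitr n' i| ≤ 1 := by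
  unfold bitr; split <;> split <;> norm_num

lemma abs_bitr_sub_eq (n n' i : ℕ) (h : n.testBit i ≠ n'.testBit i) :
    |bitr n i - bitr n' i| = 1 := by
  unfold bitr
  rcases Bool.eq_false_or_eq_true (n.testBit i) with h1 | h1 <;>
    rcases Bool.eq_false_or_eq_true (n'.testBit i) with h2 | h2 <;>
      simp [h1, h2] at h ⊢

lemma exists_testBit_ne {dd n n' : ℕ} (hn : n < 2^dd) (hn' : n' < 2^dd) (h : n ≠ n') :
    ∃ i : Fin dd, n.testBit i ≠ n'.testBit i := by
  by_contra hc
  push_neg at hc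
  apply h
  apply Nat.eq_of_testBit_eq
  intro j
  by_cases hj : j < dd
  · exact hc ⟨j, hj⟩
  · push_neg at hj
    rw [Nat.testBit_eq_false_of_lt (lt_of_lt_of_le hn (Nat.pow_le_pow_right (by norm_num) hj)),
      Nat.testBit_eq_false_of_lt (lt_of_lt_of_le hn' (Nat.pow_le_pow_right (by norm_num) hj))]

/-! ### tsum machinery -/

lemma summable_bd (a : ℕ) (c : ℕ → ℝ) (h : ∀ k, |c k| ≤ 1) :
    Summable (fun k => w (a+k+1) * c k) := by
  apply Summable.of_norm_bounded (summable_w_shift a)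
  intro k
  rw [Real.norm_eq_abs, abs_mul, abs_of_pos (w_pos _)]
  calc w (a+k+1) * |c k| ≤ w (a+k+1) * 1 :=
        mul_le_mul_of_nonneg_left (h k) (le_of_lt (w_pos _))
    _ = w (a+k+1) := mul_one _

lemma abs_tsum_bd_le (a : ℕ) (c : ℕ → ℝ) (h : ∀ k, |c k| ≤ 1) :
    |∑' k, w (a+k+1) * c k| ≤ w a := by
  have hs := summable_bd a c h
  calc |∑' k, w (a+k+1) * c k| ≤ ∑' k, |w (a+k+1) * c k| := by
        have h1 : Summable (fun k => ‖w (a+k+1) * c k‖) := by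
          simpa only [Real.norm_eq_abs] using hs.abs
        simpa only [Real.norm_eq_abs] using norm_tsum_le_tsum_norm h1
    _ ≤ ∑' k, w (a+k+1) := by
        apply Summable.tsum_le_tsum _ hs.abs (summable_w_shift a)
        intro k
        rw [abs_mul, abs_of_pos (w_pos _)]
        calc w (a+k+1) * |c k| ≤ w (a+k+1) * 1 :=
              mul_le_mul_of_nonneg_left (h k) (le_of_lt (w_pos _))
          _ = w (a+k+1) := mul_one _
    _ = w a := tsum_w_shift a

lemma abs_tsum_bd_le_shift (a j : ℕ) (c : ℕ → ℝ) (h : ∀ k, |c k| ≤ 1)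
    (h0 : ∀ k, k < j → c k = 0) : |∑' k, w (a+k+1) * c k| ≤ w (a+j) := by
  have hs := summable_bd a c h
  rw [← Summable.sum_add_tsum_nat_add j hs]
  have h1 : ∑ k ∈ Finset.range j, w (a+k+1) * c k = 0 := by
    apply Finset.sum_eq_zero
    intro k hk
    rw [h0 k (Finset.mem_range.mp hk), mul_zero]
  rw [h1, zero_add]
  have h2 : (fun k => w (a+(k+j)+1) * c (k+j)) = (fun k => w ((a+j)+k+1) * c (k+j)) := by
    funext k
    rw [show a+(k+j)+1 = (a+j)+k+1 by omega]
  calc |∑' k, w (a+(k+j)+1) * c (k+j)| = |∑' k, w ((a+j)+k+1) * c (k+j)| := by rw [h2]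
    _ ≤ w (a+j) := abs_tsum_bd_le (a+j) (fun k => c (k+j)) (fun k => h (k+j))

lemma tsum_sep (a J k₀ : ℕ) (c : ℕ → ℝ) (h : ∀ k, |c k| ≤ 1) (h0 : ∀ k, k < k₀ → c k = 0)
    (hk₀ : |c k₀| = 1) (hJ : k₀ < J) (hhi : ∀ k, J ≤ k → c k = 0) :
    w (a+J) ≤ |∑' k, w (a+k+1) * c k| := by
  have hs := summable_bd a c h
  rw [← Summable.sum_add_tsum_nat_add (k₀+1) hs]
  have h1 : ∑ k ∈ Finset.range (k₀+1), w (a+k+1) * c k = w (a+k₀+1) * c k₀ := by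
    rw [Finset.sum_eq_single k₀]
    · intro k hk hne
      rw [Finset.mem_range] at hk
      rw [h0 k (by omega), mul_zero]
    · intro hk
      exact absurd (Finset.self_mem_range_succ k₀) hk
  rw [h1]
  -- tail is a finite sum
  set T := ∑' k, w (a+(k+(k₀+1))+1) * c (k+(k₀+1)) with hT
  have hTsum : T = ∑ k ∈ Finset.range (J-(k₀+1)), w (a+(k+(k₀+1))+1) * c (k+(k₀+1)) := by
    apply tsum_eq_sum
    intro k hk
    rw [Finset.mem_range] at hk
    push_neg at hk
    rw [hhi (k+(k₀+1)) (by omega), mul_zero]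
  have hTle : |T| ≤ w (a+k₀+1) - w (a+J) := by
    rw [hTsum]
    calc |∑ k ∈ Finset.range (J-(k₀+1)), w (a+(k+(k₀+1))+1) * c (k+(k₀+1))|
        ≤ ∑ k ∈ Finset.range (J-(k₀+1)), |w (a+(k+(k₀+1))+1) * c (k+(k₀+1))| :=
          Finset.abs_sum_le_sum_abs _ _
      _ ≤ ∑ k ∈ Finset.range (J-(k₀+1)), w ((a+k₀+1)+k+1) := by
          apply Finset.sum_le_sum
          intro k _
          rw [abs_mul, abs_of_pos (w_pos _), show a+(k+(k₀+1))+1 = (a+k₀+1)+k+1 by omega]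
          calc w ((a+k₀+1)+k+1) * |c (k+(k₀+1))| ≤ w ((a+k₀+1)+k+1) * 1 :=
                mul_le_mul_of_nonneg_left (h _) (le_of_lt (w_pos _))
            _ = w ((a+k₀+1)+k+1) := mul_one _
      _ = w (a+k₀+1) - w ((a+k₀+1)+(J-(k₀+1))) := sum_w _ _
      _ = w (a+k₀+1) - w (a+J) := by rw [show (a+k₀+1)+(J-(k₀+1)) = a+J by omega]
  have habs : |w (a+k₀+1) * c k₀| = w (a+k₀+1) := by
    rw [abs_mul, abs_of_pos (w_pos _), hk₀, mul_one]
  calc w (a+J) = w (a+k₀+1) - (w (a+k₀+1) - w (a+J)) := by ring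
    _ ≤ |w (a+k₀+1) * c k₀| - |T| := by rw [habs]; linarith
    _ ≤ |w (a+k₀+1) * c k₀ + T| := by
        have := abs_add_le (w (a+k₀+1) * c k₀ + T) (-T)
        simp only [add_neg_cancel_right, abs_neg] at this
        linarith

end BFA

namespace BFA

variable {d : ℕ}

/-! ### trees -/

/-- schedule of tree `m`: `g k = f(m+3+k, m+3)` -/
def sg (f : ℝ → ℝ → ℝ) (m : ℕ) : ℕ → ℝ := fun k => f ((m+3+k : ℕ) : ℝ) ((m+3 : ℕ) : ℝ)

/-- branching numbers of tree `m` -/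
def nn (f : ℝ → ℝ → ℝ) (m : ℕ) (k : ℕ) : ℕ := NN (sg f m) k

lemma nn_pos (f : ℝ → ℝ → ℝ) (m k : ℕ) : 0 < nn f m k := NN_pos _ _ (Cf_pos _ _)

/-- a tree point from a digit sequence -/
def pt (d : ℕ) (m : ℕ) (e : ℕ → ℕ) : EuclideanSpace ℝ (Fin d) :=
  WithLp.toLp 2 (fun i => 5 * w (m+3) + ∑' k, w ((m+3)+k+1) * bitr (e k) i)

lemma summable_pt (m : ℕ) (e : ℕ → ℕ) (i : ℕ) :
    Summable (fun k => w ((m+3)+k+1) * bitr (e k) i) :=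
  summable_bd _ _ (fun k => by
    rw [abs_of_nonneg (bitr_nonneg _ _)]; exact bitr_le_one _ _)

lemma pt_coord_mem (m : ℕ) (e : ℕ → ℕ) (i : Fin d) :
    5 * w (m+3) ≤ pt d m e i ∧ pt d m e i ≤ 6 * w (m+3) := by
  have h1 : 0 ≤ ∑' k, w ((m+3)+k+1) * bitr (e k) i :=
    tsum_nonneg (fun k => mul_nonneg (le_of_lt (w_pos _)) (bitr_nonneg _ _))
  have h2 : ∑' k, w ((m+3)+k+1) * bitr (e k) i ≤ w (m+3) := by
    have := abs_tsum_bd_le (m+3) (fun k => bitr (e k) i) (fun k => by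
      rw [abs_of_nonneg (bitr_nonneg _ _)]; exact bitr_le_one _ _)
    calc ∑' k, w ((m+3)+k+1) * bitr (e k) i
        ≤ |∑' k, w ((m+3)+k+1) * bitr (e k) i| := le_abs_self _
      _ ≤ w (m+3) := this
  unfold pt
  simp only [PiLp.toLp_apply]
  constructor
  · linarith
  · linarith

lemma pt_sub (m : ℕ) (e e' : ℕ → ℕ) (i : Fin d) :
    pt d m e i - pt d m e' i = ∑' k, w ((m+3)+k+1) * (bitr (e k) i - bitr (e' k) i) := by
  have hs := summable_pt m e i
  have hs' := summable_pt m e' i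
  have : ∑' k, w ((m+3)+k+1) * (bitr (e k) i - bitr (e' k) i)
      = (∑' k, w ((m+3)+k+1) * bitr (e k) i) - ∑' k, w ((m+3)+k+1) * bitr (e' k) i := by
    rw [← Summable.tsum_sub hs hs']
    congr 1
    funext k
    ring
  rw [this]
  unfold pt
  simp only [PiLp.toLp_apply]
  ring

lemma abs_c_le (e e' : ℕ → ℕ) (i : ℕ) : ∀ k, |bitr (e k) i - bitr (e' k) i| ≤ 1 :=
  fun k => abs_bitr_sub_le _ _ _

/-- points whose digits agree below `j` are close -/
lemma pt_dist_le (hd : 0 < d) (m j : ℕ) (e e' : ℕ → ℕ) (hagree : ∀ k, k < j → e k = e' k) :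
    dist (pt d m e) (pt d m e') ≤ Real.sqrt d * w ((m+3)+j) := by
  apply dist_le_of_coords _ _ _ (le_of_lt (w_pos _))
  intro i
  rw [pt_sub]
  apply abs_tsum_bd_le_shift _ _ _ (abs_c_le e e' i)
  intro k hk
  rw [hagree k hk, sub_self]

/-- points whose digits differ at some place `< J` but agree from `J` on are far apart -/
lemma pt_dist_ge (hd : 0 < d) (m J : ℕ) (e e' : ℕ → ℕ)
    (hb : ∀ k, e k < 2^d) (hb' : ∀ k, e' k < 2^d)
    (hne : ∃ k, k < J ∧ e k ≠ e' k) (hhi : ∀ k, J ≤ k → e k = e' k) :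
    w ((m+3)+J) ≤ dist (pt d m e) (pt d m e') := by
  classical
  have hex : ∃ k, e k ≠ e' k := ⟨hne.choose, hne.choose_spec.2⟩
  set k₀ := Nat.find hex with hk₀def
  have hk₀ : e k₀ ≠ e' k₀ := Nat.find_spec hex
  have hmin : ∀ k, k < k₀ → e k = e' k := fun k hk => by
    by_contra hc
    exact absurd (Nat.find_min' hex hc) (not_le.mpr hk)
  have hk₀J : k₀ < J := by
    obtain ⟨k, hkJ, hkne⟩ := hne
    have := Nat.find_min' hex hkne
    omega
  obtain ⟨i₀, hi₀⟩ := exists_testBit_ne (hb k₀) (hb' k₀) hk₀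
  calc w ((m+3)+J)
      ≤ |∑' k, w ((m+3)+k+1) * (bitr (e k) i₀ - bitr (e' k) i₀)| := by
        apply tsum_sep (m+3) J k₀ _ (abs_c_le e e' i₀)
        · intro k hk
          rw [hmin k hk, sub_self]
        · exact abs_bitr_sub_eq _ _ _ hi₀
        · exact hk₀J
        · intro k hk
          rw [hhi k hk, sub_self]
    _ = |pt d m e i₀ - pt d m e' i₀| := by rw [pt_sub]
    _ ≤ dist (pt d m e) (pt d m e') := coord_le_dist _ _ _

/-- the tree of index `m` -/
def TreeSet (d : ℕ) (f : ℝ → ℝ → ℝ) (m : ℕ) : Set (EuclideanSpace ℝ (Fin d)) :=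
  {x | ∃ e : ℕ → ℕ, (∀ k, e k < nn f m k) ∧ x = pt d m e}

/-- the global compact set -/
def Xset (d : ℕ) (f : ℝ → ℝ → ℝ) : Set (EuclideanSpace ℝ (Fin d)) :=
  {0} ∪ ⋃ m : ℕ, TreeSet d f m

lemma zero_mem_Xset (f : ℝ → ℝ → ℝ) : (0 : EuclideanSpace ℝ (Fin d)) ∈ Xset d f :=
  Or.inl rfl

lemma tree_subset_Xset (f : ℝ → ℝ → ℝ) (m : ℕ) : TreeSet d f m ⊆ Xset d f :=
  fun x hx => Or.inr (Set.mem_iUnion.mpr ⟨m, hx⟩)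

end BFA

namespace BFA

variable {d : ℕ}

lemma tree_coord (f : ℝ → ℝ → ℝ) (m : ℕ) {x : EuclideanSpace ℝ (Fin d)}
    (hx : x ∈ TreeSet d f m) (i : Fin d) :
    5 * w (m+3) ≤ x i ∧ x i ≤ 6 * w (m+3) := by
  obtain ⟨e, _, rfl⟩ := hx
  exact pt_coord_mem m e i

/-- distinct trees are far apart -/
lemma tree_sep (hd : 0 < d) (f : ℝ → ℝ → ℝ) {m j : ℕ} (hmj : m ≠ j)
    {x y : EuclideanSpace ℝ (Fin d)} (hx : x ∈ TreeSet d f m) (hy : y ∈ TreeSet d f j) :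
    w (m+2) ≤ dist x y := by
  set i : Fin d := ⟨0, hd⟩
  obtain ⟨hx1, hx2⟩ := tree_coord f m hx i
  obtain ⟨hy1, hy2⟩ := tree_coord f j hy i
  have h32 : w (m+3) = w (m+2) / 2 := w_succ (m+2)
  have hwpos := w_pos (m+3)
  have key : w (m+2) ≤ |x i - y i| := by
    rcases lt_or_gt_of_ne hmj with h | h
    · -- m < j : y is much smaller
      have hj : w (j+3) ≤ w (m+4) := w_anti (by omega)
      have h43 : w (m+4) = w (m+3) / 2 := w_succ (m+3)
      rw [le_abs]
      left
      linarith
    · -- j < m : y is much bigger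
      have hj : w (m+2) ≤ w (j+3) := w_anti (by omega)
      rw [le_abs]
      right
      linarith
  exact le_trans key (coord_le_dist x y i)

lemma tree_zero_sep (hd : 0 < d) (f : ℝ → ℝ → ℝ) {m : ℕ}
    {x : EuclideanSpace ℝ (Fin d)} (hx : x ∈ TreeSet d f m) :
    w (m+2) ≤ dist x 0 := by
  set i : Fin d := ⟨0, hd⟩
  obtain ⟨hx1, _⟩ := tree_coord f m hx i
  have h32 : w (m+3) = w (m+2) / 2 := w_succ (m+2)
  have hwpos := w_pos (m+3)
  have key : w (m+2) ≤ |x i - (0 : EuclideanSpace ℝ (Fin d)) i| := by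
    have : (0 : EuclideanSpace ℝ (Fin d)) i = 0 := rfl
    rw [this, sub_zero, le_abs]
    left
    linarith
  exact le_trans key (coord_le_dist x 0 i)

/-- each tree is isolated within `X` -/
lemma tree_isolated (hd : 0 < d) (f : ℝ → ℝ → ℝ) {m : ℕ}
    {x y : EuclideanSpace ℝ (Fin d)} (hx : x ∈ TreeSet d f m) (hy : y ∈ Xset d f)
    (hym : y ∉ TreeSet d f m) : w (m+2) ≤ dist x y := by
  rcases hy with hy0 | hyT
  · rw [Set.mem_singleton_iff] at hy0
    subst hy0
    exact tree_zero_sep hd f hx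
  · obtain ⟨j, hyj⟩ := Set.mem_iUnion.mp hyT
    have hmj : m ≠ j := fun h => hym (h ▸ hyj)
    exact tree_sep hd f hmj hx hyj

/-- trees are small -/
lemma tree_in_ball (f : ℝ → ℝ → ℝ) (m : ℕ) :
    TreeSet d f m ⊆ Metric.closedBall (0 : EuclideanSpace ℝ (Fin d)) (Real.sqrt d * w m) := by
  intro x hx
  rw [Metric.mem_closedBall]
  apply dist_le_of_coords _ _ _ (le_of_lt (w_pos m))
  intro i
  obtain ⟨h1, h2⟩ := tree_coord f m hx i
  have hz : (0 : EuclideanSpace ℝ (Fin d)) i = 0 := rfl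
  rw [hz, sub_zero]
  have e1 : w (m+3) = w m / 8 := by
    rw [show m+3 = (m+2)+1 by omega, w_succ, show m+2 = (m+1)+1 by omega, w_succ, w_succ]
    ring
  rw [abs_of_nonneg (by linarith [w_pos (m+3)])]
  rw [e1] at h2
  linarith [w_pos m]

/-- trees are compact -/
lemma isCompact_tree (f : ℝ → ℝ → ℝ) (m : ℕ) : IsCompact (TreeSet d f m) := by
  classical
  let Dom := ∀ k : ℕ, {n : ℕ // n < nn f m k}
  let Ψ : Dom → (Fin d → ℝ) := fun e => fun i => pt d m (fun k => (e k : ℕ)) i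
  have hΨ : Continuous Ψ := by
    apply continuous_pi
    intro i
    show Continuous (fun e : Dom => pt d m (fun k => ((e k : ℕ))) i)
    unfold pt
    simp only [PiLp.toLp_apply]
    apply Continuous.add continuous_const
    apply continuous_tsum (u := fun k => w ((m+3)+k+1))
    · intro k
      have h1 : Continuous (fun e : Dom => e k) := continuous_apply k
      have h2 : Continuous (fun n : {n : ℕ // n < nn f m k} => w ((m+3)+k+1) * bitr (n : ℕ) i) :=
        continuous_of_discreteTopology
      exact h2.comp h1
    · exact summable_w_shift (m+3)
    · intro k e
      rw [Real.norm_eq_abs, abs_mul, abs_of_pos (w_pos _)]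
      calc w ((m+3)+k+1) * |bitr ((e k : ℕ)) i|
          ≤ w ((m+3)+k+1) * 1 := by
            apply mul_le_mul_of_nonneg_left _ (le_of_lt (w_pos _))
            rw [abs_of_nonneg (bitr_nonneg _ _)]
            exact bitr_le_one _ _
        _ = w ((m+3)+k+1) := mul_one _
  let Φ : Dom → EuclideanSpace ℝ (Fin d) := fun e => pt d m (fun k => (e k : ℕ))
  have hΦ : Continuous Φ := by
    have heq : Φ = (EuclideanSpace.equiv (Fin d) ℝ).symm ∘ Ψ := rfl
    rw [heq]
    exact (EuclideanSpace.equiv (Fin d) ℝ).symm.continuous.comp hΨ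
  have hrange : TreeSet d f m = Set.range Φ := by
    ext x
    constructor
    · rintro ⟨e, he, rfl⟩
      refine ⟨fun k => ⟨e k, he k⟩, rfl⟩
    · rintro ⟨e, rfl⟩
      exact ⟨fun k => (e k : ℕ), fun k => (e k).2, rfl⟩
  rw [hrange]
  exact isCompact_range hΦ

lemma Xset_sub_ball (f : ℝ → ℝ → ℝ) :
    Xset d f ⊆ Metric.closedBall (0 : EuclideanSpace ℝ (Fin d)) (Real.sqrt d * 1) := by
  rintro x (hx | hx)
  · rw [Set.mem_singleton_iff] at hx
    subst hx
    rw [Metric.mem_closedBall, dist_self]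
    positivity
  · obtain ⟨m, hm⟩ := Set.mem_iUnion.mp hx
    have := tree_in_ball f m hm
    rw [Metric.mem_closedBall] at this ⊢
    calc dist x 0 ≤ Real.sqrt d * w m := this
      _ ≤ Real.sqrt d * 1 := by
          apply mul_le_mul_of_nonneg_left (w_le_one m) (Real.sqrt_nonneg d)

lemma isClosed_Xset (f : ℝ → ℝ → ℝ) : IsClosed (Xset d f) := by
  have hXeq : Xset d f = ⋂ M : ℕ, (({0} ∪ ⋃ m ∈ Finset.range M, TreeSet d f m) ∪
      Metric.closedBall (0 : EuclideanSpace ℝ (Fin d)) (Real.sqrt d * w M)) := by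
    apply Set.Subset.antisymm
    · intro x hx
      apply Set.mem_iInter.mpr
      intro M
      rcases hx with hx0 | hxT
      · exact Or.inl (Or.inl hx0)
      · obtain ⟨m, hm⟩ := Set.mem_iUnion.mp hxT
        by_cases hmM : m < M
        · exact Or.inl (Or.inr (Set.mem_biUnion (Finset.mem_range.mpr hmM) hm))
        · push_neg at hmM
          right
          have h1 := tree_in_ball f m hm
          rw [Metric.mem_closedBall] at h1 ⊢
          calc dist x 0 ≤ Real.sqrt d * w m := h1
            _ ≤ Real.sqrt d * w M :=
                mul_le_mul_of_nonneg_left (w_anti hmM) (Real.sqrt_nonneg d)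
    · intro x hx
      rw [Set.mem_iInter] at hx
      by_contra hxX
      have hball : ∀ M : ℕ, x ∈ Metric.closedBall (0 : EuclideanSpace ℝ (Fin d))
          (Real.sqrt d * w M) := by
        intro M
        rcases hx M with (h0 | hT) | hb
        · exact absurd (Or.inl h0) hxX
        · obtain ⟨m, _, hm⟩ := Set.mem_iUnion₂.mp hT
          exact absurd (tree_subset_Xset f m hm) hxX
        · exact hb
      have hx0 : x ≠ 0 := fun h => hxX (h ▸ zero_mem_Xset f)
      have hdist : 0 < dist x 0 := dist_pos.mpr hx0
      obtain ⟨M, hM⟩ := exists_pow_lt_of_lt_one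
        (div_pos hdist (by positivity : (0:ℝ) < Real.sqrt d + 1)) (by norm_num : (1:ℝ)/2 < 1)
      have h1 := hball M
      rw [Metric.mem_closedBall] at h1
      have h2 : Real.sqrt d * w M ≤ (Real.sqrt d + 1) * w M := by
        have := w_pos M
        nlinarith [Real.sqrt_nonneg d]
      have h3 : (Real.sqrt d + 1) * w M < dist x 0 := by
        have hw : w M = (1/2 : ℝ)^M := rfl
        rw [hw]
        calc (Real.sqrt d + 1) * (1/2:ℝ)^M < (Real.sqrt d + 1) * (dist x 0 / (Real.sqrt d + 1)) := by
              apply mul_lt_mul_of_pos_left hM (by positivity)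
          _ = dist x 0 := by field_simp
      linarith
  rw [hXeq]
  apply isClosed_iInter
  intro M
  apply IsClosed.union
  · apply IsClosed.union
    · exact isClosed_singleton
    · apply Set.Finite.isClosed_biUnion (Finset.finite_toSet _)
      intro m _
      exact (isCompact_tree f m).isClosed
  · exact Metric.isClosed_closedBall

lemma isCompact_Xset (f : ℝ → ℝ → ℝ) : IsCompact (Xset d f) :=
  IsCompact.of_isClosed_subset (isCompact_closedBall _ _) (isClosed_Xset f) (Xset_sub_ball f)

end BFA

namespace BFA

variable {d : ℕ}

/-! ### consequences of `MemL` -/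

lemma fL_nonneg {f : ℝ → ℝ → ℝ} (hf : MemL d f) {u v : ℝ} (h : v ≤ u) : 0 ≤ f u v :=
  hf.1 u v h

lemma fL_mono_snd {f : ℝ → ℝ → ℝ} (hf : MemL d f) {u a b : ℝ} (hab : a ≤ b) (hbu : b ≤ u) :
    f u b ≤ f u a := by
  have h1 := hf.2.2.1 u b a hab hbu
  have h2 := hf.1 b a hab
  linarith

lemma fL_mono_fst {f : ℝ → ℝ → ℝ} (hf : MemL d f) {v a b : ℝ} (hva : v ≤ a) (hab : a ≤ b) :
    f a v ≤ f b v := by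
  have h1 := hf.2.2.1 b a v hva hab
  have h2 := hf.1 b a hab
  linarith

lemma fL_lip {f : ℝ → ℝ → ℝ} (hf : MemL d f) {v u₁ u₂ : ℝ} (h1 : v ≤ u₁) (h2 : v ≤ u₂) :
    |f u₁ v - f u₂ v| ≤ d * |u₁ - u₂| :=
  hf.2.2.2 v u₁ u₂ h1 h2

lemma sg_zero (f : ℝ → ℝ → ℝ) (hf : MemL d f) (m : ℕ) : sg f m 0 = 0 := by
  unfold sg
  rw [show m+3+0 = m+3 by omega]
  exact hf.2.1 _

lemma sg_mono (f : ℝ → ℝ → ℝ) (hf : MemL d f) (m : ℕ) (k : ℕ) : sg f m k ≤ sg f m (k+1) := by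
  unfold sg
  apply fL_mono_fst hf (by push_cast; linarith) (by push_cast; linarith)

lemma sg_lip (f : ℝ → ℝ → ℝ) (hf : MemL d f) (m : ℕ) (k : ℕ) :
    sg f m (k+1) ≤ sg f m k + d := by
  have h := fL_lip hf (v := ((m+3:ℕ):ℝ)) (u₁ := ((m+3+(k+1):ℕ):ℝ)) (u₂ := ((m+3+k:ℕ):ℝ))
    (by push_cast; linarith) (by push_cast; linarith)
  have he : |((m+3+(k+1):ℕ):ℝ) - ((m+3+k:ℕ):ℝ)| = 1 := by
    push_cast
    rw [show ((m:ℝ)+3+(k+1)) - ((m:ℝ)+3+k) = 1 by ring, abs_one]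
  rw [he, mul_one] at h
  have := abs_le.mp h
  unfold sg
  linarith [this.1, this.2]

lemma nn_le_pow {f : ℝ → ℝ → ℝ} (hf : MemL d f) (m k : ℕ) : nn f m k ≤ 2^d :=
  NN_le (sg f m) d (sg_zero f hf m) (sg_mono f hf m) (sg_lip f hf m) k

/-! ### window product bounds -/

lemma prod_nn_lower {f : ℝ → ℝ → ℝ} (hf : MemL d f) (m p q : ℕ) :
    (2:ℝ)^(sg f m (p+q) - sg f m p - 1)
      ≤ ((∏ k ∈ Finset.range q, nn f m (p+k) : ℕ) : ℝ) := by
  have hlo := (Cf_bounds (sg f m) (sg_zero f hf m) (sg_mono f hf m) (p+q)).1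
  have hhi := (Cf_bounds (sg f m) (sg_zero f hf m) (sg_mono f hf m) p).2
  have hwin := Cf_window (sg f m) p q
  have hCpos : (0:ℝ) < Cf (sg f m) p := by exact_mod_cast Cf_pos (sg f m) p
  have hprod : ((∏ k ∈ Finset.range q, nn f m (p+k) : ℕ) : ℝ)
      = (Cf (sg f m) (p+q) : ℝ) / (Cf (sg f m) p : ℝ) := by
    rw [eq_div_iff (ne_of_gt hCpos)]
    have heq : ((∏ k ∈ Finset.range q, nn f m (p+k) : ℕ):ℝ) * (Cf (sg f m) p : ℝ)
        = ((Cf (sg f m) p * ∏ k ∈ Finset.range q, NN (sg f m) (p+k) : ℕ) : ℝ) := by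
      push_cast
      unfold nn
      ring
    rw [heq, ← hwin]
  rw [hprod]
  have hexp : (2:ℝ)^(sg f m (p+q) - sg f m p - 1)
      = (2:ℝ)^(sg f m (p+q)) / ((2:ℝ)^(sg f m p) * 2) := by
    rw [show sg f m (p+q) - sg f m p - 1 = sg f m (p+q) - (sg f m p + 1) by ring]
    rw [Real.rpow_sub (by norm_num), Real.rpow_add (by norm_num), Real.rpow_one]
  rw [hexp]
  apply div_le_div₀ (by positivity) hlo (by positivity)
  linarith

lemma Cf_upper {f : ℝ → ℝ → ℝ} (hf : MemL d f) (m q : ℕ) :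
    (Cf (sg f m) q : ℝ) ≤ (2:ℝ)^(sg f m q + 1) := by
  have hhi := (Cf_bounds (sg f m) (sg_zero f hf m) (sg_mono f hf m) q).2
  rw [Real.rpow_add (by norm_num), Real.rpow_one]
  linarith

lemma Cf_eq_prod (f : ℝ → ℝ → ℝ) (m J : ℕ) :
    Cf (sg f m) J = ∏ k ∈ Finset.range J, nn f m k := by
  have := Cf_window (sg f m) 0 J
  simpa [Cf, nn] using this

/-! ### hosting: near every point of `X` and every scale there is a full subtree -/

lemma pt_small (m : ℕ) (e : ℕ → ℕ) (i : Fin d) : 0 ≤ pt d m e i ∧ pt d m e i ≤ w m := by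
  obtain ⟨h1, h2⟩ := pt_coord_mem m e i
  have e1 : w (m+3) = w m / 8 := by
    rw [show m+3 = (m+2)+1 by omega, w_succ, show m+2 = (m+1)+1 by omega, w_succ, w_succ]
    ring
  have := w_pos m
  constructor
  · nlinarith
  · nlinarith

lemma hosting (hd : 0 < d) (f : ℝ → ℝ → ℝ) {x : EuclideanSpace ℝ (Fin d)}
    (hx : x ∈ Xset d f) (L : ℕ) :
    ∃ m p, ∃ e : ℕ → ℕ, (∀ k, e k < nn f m k) ∧ m+3+p ≤ L+3 ∧
      ∀ e' : ℕ → ℕ, (∀ k, e' k < nn f m k) → (∀ k, k < p → e' k = e k) →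
        dist x (pt d m e') ≤ Real.sqrt d * w L := by
  have hzero : ∀ k, (fun _ : ℕ => 0) k < nn f L k := fun k => nn_pos f L k
  rcases hx with hx0 | hxT
  · -- x = 0
    rw [Set.mem_singleton_iff] at hx0
    subst hx0
    refine ⟨L, 0, (fun _ => 0), hzero, by omega, ?_⟩
    intro e' he' _
    apply dist_le_of_coords _ _ _ (le_of_lt (w_pos L))
    intro i
    obtain ⟨h1, h2⟩ := pt_small L e' i
    have hz : (0 : EuclideanSpace ℝ (Fin d)) i = 0 := rfl
    rw [hz]
    rw [abs_le]
    constructor <;> linarith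
  · obtain ⟨j, e, he, rfl⟩ := Set.mem_iUnion.mp hxT
    by_cases hLj : L ≤ j
    · -- big scale: use the whole tree of index L
      refine ⟨L, 0, (fun _ => 0), hzero, by omega, ?_⟩
      intro e' he' _
      apply dist_le_of_coords _ _ _ (le_of_lt (w_pos L))
      intro i
      obtain ⟨h1, h2⟩ := pt_small j e i
      obtain ⟨h3, h4⟩ := pt_small L e' i
      have hwj : w j ≤ w L := w_anti hLj
      rw [abs_le]
      constructor <;> linarith
    · -- small scale: stay inside tree j
      push_neg at hLj
      refine ⟨j, L - (j+3), e, he, by omega, ?_⟩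
      intro e' he' hagree
      have hdle := pt_dist_le hd j (L - (j+3)) e e' (fun k hk => (hagree k hk).symm)
      calc dist (pt d j e) (pt d j e') ≤ Real.sqrt d * w ((j+3)+(L-(j+3))) := hdle
        _ ≤ Real.sqrt d * w L := by
            apply mul_le_mul_of_nonneg_left (w_anti (by omega)) (Real.sqrt_nonneg d)

/-! ### the separated corner family (packing lower bound) -/

lemma lower_family (hd : 0 < d) {f : ℝ → ℝ → ℝ} (hf : MemL d f) (m p q : ℕ)
    (e : ℕ → ℕ) (he : ∀ k, e k < nn f m k) :
    ∃ t : Finset (EuclideanSpace ℝ (Fin d)),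
      ((2:ℝ)^(sg f m (p+q) - sg f m p - 1) ≤ (t.card : ℝ)) ∧
      (∀ y ∈ t, ∃ e' : ℕ → ℕ, (∀ k, e' k < nn f m k) ∧ (∀ k, k < p → e' k = e k) ∧
        y = pt d m e') ∧
      (∀ y ∈ t, ∀ z ∈ t, y ≠ z → w ((m+3)+(p+q)) ≤ dist y z) := by
  classical
  set ext : (∀ k : Fin q, Fin (nn f m (p+k))) → (ℕ → ℕ) := fun τ k =>
    if hk : p ≤ k ∧ k - p < q then (τ ⟨k-p, hk.2⟩ : ℕ)
    else if k < p then e k else 0 with hext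
  have hvalid : ∀ τ, ∀ k, ext τ k < nn f m k := by
    intro τ k
    rw [hext]
    dsimp only
    split
    · rename_i hk
      have h2 := (τ ⟨k-p, hk.2⟩).2
      refine lt_of_lt_of_eq h2 ?_
      congr 1
      simp only [Fin.val_mk]
      omega
    · split
      · exact he k
      · exact nn_pos f m k
  have hagree : ∀ τ, ∀ k, k < p → ext τ k = e k := by
    intro τ k hk
    rw [hext]
    dsimp only
    rw [dif_neg (by omega), if_pos hk]
  have hhi : ∀ τ, ∀ k, p + q ≤ k → ext τ k = 0 := by
    intro τ k hk
    rw [hext]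
    dsimp only
    rw [dif_neg (by omega), if_neg (by omega)]
  have hsep : ∀ τ τ', τ ≠ τ' → w ((m+3)+(p+q)) ≤ dist (pt d m (ext τ)) (pt d m (ext τ')) := by
    intro τ τ' hne
    apply pt_dist_ge hd m (p+q) _ _
      (fun k => lt_of_lt_of_le (hvalid τ k) (nn_le_pow hf m k))
      (fun k => lt_of_lt_of_le (hvalid τ' k) (nn_le_pow hf m k))
    · -- they differ somewhere below p+q
      obtain ⟨i, hi⟩ := Function.ne_iff.mp hne
      refine ⟨p + i, by omega, ?_⟩
      have h1 : ext τ (p+i) = (τ ⟨(p+i)-p, by omega⟩ : ℕ) := by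
        rw [hext]; dsimp only; rw [dif_pos ⟨by omega, by omega⟩]
      have h2 : ext τ' (p+i) = (τ' ⟨(p+i)-p, by omega⟩ : ℕ) := by
        rw [hext]; dsimp only; rw [dif_pos ⟨by omega, by omega⟩]
      have hii : (⟨(p+i)-p, by omega⟩ : Fin q) = i := by
        apply Fin.ext
        simp only
        omega
      rw [h1, h2, hii]
      intro hc
      exact hi (Fin.val_injective hc)
    · intro k hk
      rw [hhi τ k hk, hhi τ' k hk]
  have hinj : Function.Injective (fun τ => pt d m (ext τ)) := by
    intro τ τ' hpt
    by_contra hne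
    have := hsep τ τ' hne
    have hpt' : pt d m (ext τ) = pt d m (ext τ') := hpt
    rw [hpt', dist_self] at this
    exact absurd this (not_le.mpr (w_pos _))
  refine ⟨Finset.image (fun τ => pt d m (ext τ)) Finset.univ, ?_, ?_, ?_⟩
  · rw [Finset.card_image_of_injective _ hinj, Finset.card_univ]
    have hcard : Fintype.card (∀ k : Fin q, Fin (nn f m (p+k)))
        = ∏ k ∈ Finset.range q, nn f m (p+k) := by
      rw [Fintype.card_pi]
      simp only [Fintype.card_fin]
      exact Fin.prod_univ_eq_prod_range (fun k => nn f m (p+k)) q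
    rw [hcard]
    exact prod_nn_lower hf m p q
  · intro y hy
    obtain ⟨τ, _, rfl⟩ := Finset.mem_image.mp hy
    exact ⟨ext τ, hvalid τ, hagree τ, rfl⟩
  · intro y hy z hz hyz
    obtain ⟨τ, _, rfl⟩ := Finset.mem_image.mp hy
    obtain ⟨τ', _, rfl⟩ := Finset.mem_image.mp hz
    exact hsep τ τ' (fun h => hyz (by rw [h]))

/-! ### injection into prefixes (packing upper bound) -/

lemma upper_count (hd : 0 < d) {f : ℝ → ℝ → ℝ} (hf : MemL d f) (m J : ℕ)
    (s : Finset (EuclideanSpace ℝ (Fin d)))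
    (hs : ∀ y ∈ s, y ∈ TreeSet d f m)
    (hsep : ∀ y ∈ s, ∀ z ∈ s, y ≠ z → Real.sqrt d * w ((m+3)+J) < dist y z) :
    s.card ≤ Cf (sg f m) J := by
  classical
  set ψ : EuclideanSpace ℝ (Fin d) → (∀ k : Fin J, Fin (nn f m k)) := fun y =>
    if h : y ∈ TreeSet d f m then
      (fun k => ⟨(Classical.choose h) k, (Classical.choose_spec h).1 k⟩)
    else fun k => ⟨0, nn_pos f m k⟩ with hψ
  have hinj : Set.InjOn ψ ↑s := by
    intro y hy z hz hψeq
    by_contra hne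
    have hyT := hs y hy
    have hzT := hs z hz
    have hEy := Classical.choose_spec hyT
    have hEz := Classical.choose_spec hzT
    have hagree : ∀ k, k < J → (Classical.choose hyT) k = (Classical.choose hzT) k := by
      intro k hk
      rw [hψ] at hψeq
      simp only [dif_pos hyT, dif_pos hzT] at hψeq
      have := congrFun hψeq ⟨k, hk⟩
      exact congrArg Fin.val this
    have hdle : dist y z ≤ Real.sqrt d * w ((m+3)+J) := by
      rw [hEy.2, hEz.2]
      exact pt_dist_le hd m J _ _ hagree
    exact absurd hdle (not_le.mpr (hsep y hy z hz hne))
  calc s.card ≤ Fintype.card (∀ k : Fin J, Fin (nn f m k)) := by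
        have := Finset.card_le_card_of_injOn ψ (fun y _ => Finset.mem_univ (ψ y)) hinj
        simpa using this
    _ = Cf (sg f m) J := by
        rw [Fintype.card_pi]
        simp only [Fintype.card_fin]
        rw [Cf_eq_prod f m J]
        exact Fin.prod_univ_eq_prod_range (fun k => nn f m k) J

end BFA

namespace BFA

variable {d : ℕ}

/-! ### numeric helpers -/

/-- the constant `z` of the theorem -/
def Zc (d : ℕ) : ℝ := (d:ℝ)^2 + 5*(d:ℝ) + 10

lemma Zc_nonneg (d : ℕ) : 0 ≤ Zc d := by unfold Zc; positivity

lemma Zc_ge_ten (d : ℕ) : (10:ℝ) ≤ Zc d := by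
  unfold Zc
  nlinarith [sq_nonneg ((d:ℝ)), Nat.cast_nonneg (α := ℝ) d]

lemma sqrt_le_rpow (hd : 0 < d) : Real.sqrt d ≤ (2:ℝ)^((d:ℕ):ℝ) := by
  have hd1 : (1:ℝ) ≤ (d:ℝ) := by exact_mod_cast hd
  have h1 : Real.sqrt d ≤ (d:ℝ) := by
    calc Real.sqrt d ≤ Real.sqrt ((d:ℝ)^2) := Real.sqrt_le_sqrt (by nlinarith)
      _ = (d:ℝ) := Real.sqrt_sq (by linarith)
  have h2 : (d:ℝ) ≤ (2:ℝ)^((d:ℕ):ℝ) := by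
    rw [Real.rpow_natCast]
    have hlt := @Nat.lt_two_pow_self d
    exact_mod_cast hlt.le
  linarith

lemma sqrt_w_le (hd : 0 < d) (a : ℕ) (v : ℝ) (h : v + d ≤ (a:ℝ)) :
    Real.sqrt d * w a ≤ (2:ℝ)^(-v) := by
  have h1 : Real.sqrt d * w a ≤ (2:ℝ)^((d:ℕ):ℝ) * (2:ℝ)^(-(a:ℝ)) := by
    rw [← w_eq_rpow]
    exact mul_le_mul_of_nonneg_right (sqrt_le_rpow hd) (w_pos a).le
  have h2 : (2:ℝ)^((d:ℕ):ℝ) * (2:ℝ)^(-(a:ℝ)) = (2:ℝ)^(((d:ℕ):ℝ) - (a:ℝ)) := by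
    rw [← Real.rpow_add (by norm_num : (0:ℝ) < 2), sub_eq_add_neg]
  have h3 : (2:ℝ)^(((d:ℕ):ℝ) - (a:ℝ)) ≤ (2:ℝ)^(-v) :=
    Real.rpow_le_rpow_of_exponent_le one_le_two (by linarith)
  linarith [h2 ▸ h1]

lemma four_rpow_lt_w (u : ℝ) (a : ℕ) (h : (a:ℝ) < u - 2) : 4 * (2:ℝ)^(-u) < w a := by
  have h4 : (4:ℝ) * (2:ℝ)^(-u) = (2:ℝ)^(2 - u) := by
    have : (4:ℝ) = (2:ℝ)^((2:ℕ):ℝ) := by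
      rw [Real.rpow_natCast]; norm_num
    rw [this, ← Real.rpow_add (by norm_num : (0:ℝ) < 2), sub_eq_add_neg]
    norm_num
  rw [w_eq_rpow, h4]
  apply Real.rpow_lt_rpow_of_exponent_lt (by norm_num)
  linarith

lemma w_gt (v : ℝ) (a : ℕ) (h : (a:ℝ) < v) : (2:ℝ)^(-v) < w a := by
  rw [w_eq_rpow]
  apply Real.rpow_lt_rpow_of_exponent_lt (by norm_num)
  linarith

/-! ### the main packing lower bound -/

lemma packing_lower_all (hd : 0 < d) {f : ℝ → ℝ → ℝ} (hf : MemL (d:ℝ) f) {u v : ℝ}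
    (hv : 0 ≤ v) (hZ : v + Zc d ≤ u) (x : ↥(Xset d f)) :
    ((⌈(2:ℝ)^(f u (v + Zc d) - 3*(d:ℝ) - 1)⌉₊ : ℕ) : ℕ∞)
      ≤ packingNumber ((2:ℝ)^(-u)) (Metric.closedBall x ((2:ℝ)^(-v))) := by
  have hd1 : (1:ℝ) ≤ (d:ℝ) := by exact_mod_cast hd
  have hZ10 := Zc_ge_ten d
  have hu0 : (0:ℝ) ≤ u := by linarith
  have hvc : (⌈v⌉₊ : ℝ) < v + 1 := Nat.ceil_lt_add_one hv
  have hvc' : v ≤ (⌈v⌉₊:ℝ) := Nat.le_ceil v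
  have huc : (⌈u⌉₊ : ℝ) < u + 1 := Nat.ceil_lt_add_one hu0
  have huc' : u ≤ (⌈u⌉₊:ℝ) := Nat.le_ceil u
  set L : ℕ := ⌈v⌉₊ + d with hL
  have hZd : (d:ℝ) + 7 ≤ Zc d := by unfold Zc; nlinarith
  have hL6 : ((L + 6 : ℕ) : ℝ) ≤ u := by push_cast [hL]; linarith
  have hL6' : L + 6 ≤ ⌈u⌉₊ := by
    have h' : ((L+6:ℕ):ℝ) ≤ (⌈u⌉₊:ℝ) := le_trans hL6 huc'
    exact_mod_cast h'
  set jU : ℕ := ⌈u⌉₊ - 3 with hjU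
  have hjUc : (jU:ℝ) = (⌈u⌉₊:ℝ) - 3 := by
    rw [hjU, Nat.cast_sub (by omega : 3 ≤ ⌈u⌉₊)]
    norm_num
  have hL3jU : L + 3 ≤ jU := by omega
  obtain ⟨m, p, e, he, hmpL, hball⟩ := hosting hd f x.2 L
  set q : ℕ := jU - (m+3+p) with hq
  have hpq : m+3+(p+q) = jU := by omega
  obtain ⟨t, hcard, hmem, hsepw⟩ := lower_family hd hf m p q e he
  -- cast facts
  have hBD : ((m+3+p:ℕ):ℝ) ≤ ((L+3:ℕ):ℝ) := by exact_mod_cast hmpL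
  have hDC : ((L+3:ℕ):ℝ) ≤ ((jU:ℕ):ℝ) := by exact_mod_cast hL3jU
  have hAB : ((m+3:ℕ):ℝ) ≤ ((m+3+p:ℕ):ℝ) := by push_cast; linarith
  have hCu : ((jU:ℕ):ℝ) ≤ u := by rw [hjUc]; linarith
  have hCu3 : u - ((jU:ℕ):ℝ) ≤ 3 := by rw [hjUc]; linarith
  have hDu : ((L+3:ℕ):ℝ) ≤ u := le_trans hDC hCu
  have hDvz : ((L+3:ℕ):ℝ) ≤ v + Zc d := by push_cast [hL]; linarith
  -- exponent chain
  have hsg : f u (v + Zc d) - 3*(d:ℝ) - 1 ≤ sg f m (p+q) - sg f m p - 1 := by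
    have h1 : sg f m (p+q) = f ((jU:ℕ):ℝ) ((m+3:ℕ):ℝ) := by
      have h' : sg f m (p+q) = f ((m+3+(p+q):ℕ):ℝ) ((m+3:ℕ):ℝ) := rfl
      rw [hpq] at h'
      exact h'
    have h2 : sg f m p = f ((m+3+p:ℕ):ℝ) ((m+3:ℕ):ℝ) := rfl
    have hsup := hf.2.2.1 ((jU:ℕ):ℝ) ((m+3+p:ℕ):ℝ) ((m+3:ℕ):ℝ) hAB (le_trans hBD hDC)
    have hmono1 : f ((jU:ℕ):ℝ) ((L+3:ℕ):ℝ) ≤ f ((jU:ℕ):ℝ) ((m+3+p:ℕ):ℝ) :=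
      fL_mono_snd hf hBD hDC
    have hlip := fL_lip hf (v := ((L+3:ℕ):ℝ)) (u₁ := ((jU:ℕ):ℝ)) (u₂ := u) hDC hDu
    have hlip' : f u ((L+3:ℕ):ℝ) - 3*(d:ℝ) ≤ f ((jU:ℕ):ℝ) ((L+3:ℕ):ℝ) := by
      have habs := abs_le.mp hlip
      have hd3 : (d:ℝ) * |((jU:ℕ):ℝ) - u| ≤ 3*(d:ℝ) := by
        rw [abs_of_nonpos (by linarith)]
        nlinarith
      linarith [habs.1]
    have hmono2 : f u (v + Zc d) ≤ f u ((L+3:ℕ):ℝ) :=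
      fL_mono_snd hf hDvz (by linarith)
    rw [h1, h2]
    linarith
  have hKn : (⌈(2:ℝ)^(f u (v + Zc d) - 3*(d:ℝ) - 1)⌉₊ : ℕ) ≤ t.card := by
    rw [Nat.ceil_le]
    calc (2:ℝ)^(f u (v + Zc d) - 3*(d:ℝ) - 1) ≤ (2:ℝ)^(sg f m (p+q) - sg f m p - 1) :=
          Real.rpow_le_rpow_of_exponent_le one_le_two hsg
      _ ≤ (t.card : ℝ) := hcard
  have hsepStrict : ∀ y ∈ t, ∀ z_ ∈ t, y ≠ z_ → 4 * (2:ℝ)^(-u) < dist y z_ := by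
    intro y hy z_ hz hne
    have h1 := hsepw y hy z_ hz hne
    have h2 : 4 * (2:ℝ)^(-u) < w ((m+3)+(p+q)) := by
      rw [show (m+3)+(p+q) = jU by omega]
      apply four_rpow_lt_w u jU
      rw [hjUc]
      linarith
    linarith
  have htX : ∀ y ∈ t, y ∈ Xset d f := by
    intro y hy
    obtain ⟨e', he', _, rfl⟩ := hmem y hy
    exact tree_subset_Xset f m ⟨e', he', rfl⟩
  have htB : ∀ y ∈ t, dist y (x : EuclideanSpace ℝ (Fin d)) ≤ (2:ℝ)^(-v) := by
    intro y hy
    obtain ⟨e', he', hag, rfl⟩ := hmem y hy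
    have hb := hball e' he' hag
    rw [dist_comm]
    calc dist (x : EuclideanSpace ℝ (Fin d)) (pt d m e') ≤ Real.sqrt d * w L := hb
      _ ≤ (2:ℝ)^(-v) := sqrt_w_le hd L v (by push_cast [hL]; linarith)
  have hfinal := packing_ge (Xset d f) ((2:ℝ)^(-u)) ((2:ℝ)^(-v))
    (Real.rpow_pos_of_pos (by norm_num) _) x t htX htB hsepStrict
  calc ((⌈(2:ℝ)^(f u (v + Zc d) - 3*(d:ℝ) - 1)⌉₊ : ℕ) : ℕ∞) ≤ (t.card : ℕ∞) := by
        exact_mod_cast hKn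
    _ ≤ packingNumber ((2:ℝ)^(-u)) (Metric.closedBall x ((2:ℝ)^(-v))) := hfinal

/-! ### the main packing upper bound -/

lemma packing_upper (hd : 0 < d) {f : ℝ → ℝ → ℝ} (hf : MemL (d:ℝ) f) {u v : ℝ}
    (hZv : Zc d ≤ v) (hvu : v ≤ u) :
    ∃ x : ↥(Xset d f), ∃ K : ℕ,
      packingNumber ((2:ℝ)^(-u)) (Metric.closedBall x ((2:ℝ)^(-v))) ≤ (K : ℕ∞) ∧
      (K:ℝ) ≤ (2:ℝ)^(f u (v - Zc d) + Zc d) := by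
  classical
  have hd1 : (1:ℝ) ≤ (d:ℝ) := by exact_mod_cast hd
  have hZ10 := Zc_ge_ten d
  have hv0 : (0:ℝ) ≤ v := by linarith
  have hu0 : (0:ℝ) ≤ u := le_trans hv0 hvu
  have hfl : (⌊v⌋₊:ℝ) ≤ v := Nat.floor_le hv0
  have hfl' : v < (⌊v⌋₊:ℝ) + 1 := Nat.lt_floor_add_one v
  have h4 : 4 ≤ ⌊v⌋₊ := Nat.le_floor (by norm_num; linarith)
  set m : ℕ := ⌊v⌋₊ - 4 with hm
  have hmc : ((m:ℕ):ℝ) = (⌊v⌋₊:ℝ) - 4 := by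
    rw [hm, Nat.cast_sub h4]
    norm_num
  set jU2 : ℕ := ⌈u⌉₊ + d with hjU2
  have huc : (⌈u⌉₊ : ℝ) < u + 1 := Nat.ceil_lt_add_one hu0
  have huc' : u ≤ (⌈u⌉₊:ℝ) := Nat.le_ceil u
  have hm3 : m + 3 ≤ jU2 := by
    have h' : ⌊v⌋₊ ≤ ⌈u⌉₊ := le_trans (Nat.floor_mono hvu) (Nat.floor_le_ceil u)
    omega
  set q2 : ℕ := jU2 - (m+3) with hq2
  have hq2' : m+3+q2 = jU2 := by omega
  set x₀ := pt d m (fun _ => 0) with hx0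
  have hx₀T : x₀ ∈ TreeSet d f m := ⟨fun _ => 0, fun k => nn_pos f m k, rfl⟩
  have hx₀X : x₀ ∈ Xset d f := tree_subset_Xset f m hx₀T
  refine ⟨⟨x₀, hx₀X⟩, Cf (sg f m) q2, ?_, ?_⟩
  · apply packing_le (Xset d f) _ _ (Real.rpow_pos_of_pos (by norm_num) _)
    intro s hsB hsP
    set s' : Finset (EuclideanSpace ℝ (Fin d)) := s.image Subtype.val with hs'
    have hcard' : s'.card = s.card := Finset.card_image_of_injective _ Subtype.val_injective
    have hmemT : ∀ y ∈ s', y ∈ TreeSet d f m := by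
      intro y hy
      obtain ⟨py, hpy, rfl⟩ := Finset.mem_image.mp hy
      have hball := hsB (Finset.mem_coe.mpr hpy)
      rw [Metric.mem_closedBall, Subtype.dist_eq] at hball
      by_contra hnT
      have hiso := tree_isolated hd f hx₀T py.2 hnT
      have hlt : (2:ℝ)^(-v) < w (m+2) := by
        apply w_gt
        push_cast [hm, Nat.cast_sub h4]
        linarith
      rw [dist_comm] at hiso
      linarith
    have hsep' : ∀ y ∈ s', ∀ z_ ∈ s', y ≠ z_ →
        Real.sqrt d * w ((m+3)+q2) < dist y z_ := by
      intro y hy z_ hz hne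
      obtain ⟨py, hpy, rfl⟩ := Finset.mem_image.mp hy
      obtain ⟨pz, hpz, rfl⟩ := Finset.mem_image.mp hz
      have hpne : py ≠ pz := fun h => hne (congrArg Subtype.val h)
      have hP := hsP (Finset.mem_coe.mpr hpy) (Finset.mem_coe.mpr hpz) hpne
      have h1 : Real.sqrt d * w ((m+3)+q2) ≤ (2:ℝ)^(-u) := by
        rw [hq2']
        apply sqrt_w_le hd jU2 u
        push_cast [hjU2]
        linarith
      have h2 : (0:ℝ) < (2:ℝ)^(-u) := Real.rpow_pos_of_pos (by norm_num) _
      linarith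
    calc s.card = s'.card := hcard'.symm
      _ ≤ Cf (sg f m) q2 := upper_count hd hf m q2 s' hmemT hsep'
  · have h1 : (Cf (sg f m) q2 : ℝ) ≤ (2:ℝ)^(sg f m q2 + 1) := Cf_upper hf m q2
    have h2 : sg f m q2 + 1 ≤ f u (v - Zc d) + Zc d := by
      have hsgval : sg f m q2 = f ((jU2:ℕ):ℝ) ((m+3:ℕ):ℝ) := by
        have h' : sg f m q2 = f ((m+3+q2:ℕ):ℝ) ((m+3:ℕ):ℝ) := rfl
        rw [hq2'] at h'
        exact h'
      have hAu : ((m+3:ℕ):ℝ) ≤ u := by push_cast [hmc]; linarith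
      have hAC : ((m+3:ℕ):ℝ) ≤ ((jU2:ℕ):ℝ) := by exact_mod_cast hm3
      have hCu : u ≤ ((jU2:ℕ):ℝ) := by push_cast [hjU2]; linarith
      have hCud : ((jU2:ℕ):ℝ) - u ≤ (d:ℝ) + 1 := by push_cast [hjU2]; linarith
      have hlip := fL_lip hf (v := ((m+3:ℕ):ℝ)) (u₁ := ((jU2:ℕ):ℝ)) (u₂ := u) hAC hAu
      have hlip' : f ((jU2:ℕ):ℝ) ((m+3:ℕ):ℝ) ≤ f u ((m+3:ℕ):ℝ) + (d:ℝ)*((d:ℝ)+1) := by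
        have habs := (abs_le.mp hlip).2
        have hd3 : (d:ℝ) * |((jU2:ℕ):ℝ) - u| ≤ (d:ℝ)*((d:ℝ)+1) := by
          rw [abs_of_nonneg (by linarith)]
          nlinarith
        linarith
      have hmono : f u ((m+3:ℕ):ℝ) ≤ f u (v - Zc d) := by
        apply fL_mono_snd hf _ hAu
        push_cast [hmc]
        linarith
      have hZbig : (d:ℝ)*((d:ℝ)+1) + 1 ≤ Zc d := by unfold Zc; nlinarith
      rw [hsgval]
      linarith
    calc (Cf (sg f m) q2 : ℝ) ≤ (2:ℝ)^(sg f m q2 + 1) := h1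
      _ ≤ (2:ℝ)^(f u (v - Zc d) + Zc d) :=
          Real.rpow_le_rpow_of_exponent_le one_le_two h2

end BFA


/-- Every `f ∈ L(d)` is attained (up to a constant depending only on `d`) as
the branching function of a nonempty compact subset of `ℝ^d`. -/
theorem branching_function_attainable (d : ℕ) (hd : 0 < d) :
    ∃ z : ℝ, 0 ≤ z ∧ ∀ f : ℝ → ℝ → ℝ, MemL d f →
      ∃ X : Set (EuclideanSpace ℝ (Fin d)), X.Nonempty ∧ IsCompact X ∧
        ∀ u v : ℝ, 0 ≤ v → v ≤ u →
          (v ≤ u - z → ENNReal.ofReal (f u (v + z) - z) ≤ brL X u v) ∧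
          (z ≤ v → brL X u v ≤ ENNReal.ofReal (f u (v - z) + z)) := by
  refine ⟨BFA.Zc d, BFA.Zc_nonneg d, ?_⟩
  intro f hf
  refine ⟨BFA.Xset d f, ⟨0, BFA.zero_mem_Xset f⟩, BFA.isCompact_Xset f, ?_⟩
  intro u v hv hvu
  constructor
  · -- lower bound
    intro hcond
    have hZ : v + BFA.Zc d ≤ u := by linarith
    have hlow := BFA.packing_lower_all hd hf hv hZ
    unfold brL
    apply BFA.le_elog2 (K := ⌈(2:ℝ)^(f u (v + BFA.Zc d) - 3*(d:ℝ) - 1)⌉₊)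
    · calc (2:ℝ)^(f u (v + BFA.Zc d) - BFA.Zc d)
          ≤ (2:ℝ)^(f u (v + BFA.Zc d) - 3*(d:ℝ) - 1) := by
            apply Real.rpow_le_rpow_of_exponent_le one_le_two
            have hd1 : (1:ℝ) ≤ d := by exact_mod_cast hd
            unfold BFA.Zc
            nlinarith
        _ ≤ (⌈(2:ℝ)^(f u (v + BFA.Zc d) - 3*(d:ℝ) - 1)⌉₊ : ℝ) := Nat.le_ceil _
    · exact le_iInf hlow
  · -- upper bound
    intro hcond
    obtain ⟨x, K, hPK, hK2⟩ := BFA.packing_upper hd hf hcond hvu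
    have ht : 0 ≤ f u (v - BFA.Zc d) + BFA.Zc d := by
      have h1 : v - BFA.Zc d ≤ u := by
        have := BFA.Zc_nonneg d
        linarith
      have := BFA.fL_nonneg hf h1
      have := BFA.Zc_nonneg d
      linarith
    unfold brL
    calc elog2 (⨅ x' : ↥(BFA.Xset d f),
          packingNumber ((2:ℝ)^(-u)) (Metric.closedBall x' ((2:ℝ)^(-v))))
        ≤ elog2 (packingNumber ((2:ℝ)^(-u)) (Metric.closedBall x ((2:ℝ)^(-v)))) :=
          BFA.elog2_mono (iInf_le _ x)
      _ ≤ ENNReal.ofReal (f u (v - BFA.Zc d) + BFA.Zc d) := BFA.elog2_le _ ht hK2 hPK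

end
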